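/- Let k ≥ 3 and G = C(2k+1; {1,3}). Then the toughness of G equals (k+1)/(k−1). -/

import Mathlib

open SimpleGraph

def circGraph (n : ℕ) (s : Set (ZMod n)) : SimpleGraph (ZMod n) where
  Adj i j := i ≠ j ∧ (i - j ∈ s ∨ j - i ∈ s)
  symm := ⟨fun i j h => ⟨h.1.symm, h.2.symm⟩⟩
  loopless := ⟨fun i h => h.1 rfl⟩

/-- Number of connected components of `G - S`. -/
noncomputable def numComp {V : Type*} (G : SimpleGraph V) (S : Set V) : ℕ :=
  Nat.card ((G.induce Sᶜ).ConnectedComponent)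

section Basic
variable {n : ℕ}

lemma natCast_ne_zero_zmod (hn : 7 ≤ n) {a : ℕ} (h0 : 0 < a) (hlt : a < n) :
    ((a : ℕ) : ZMod n) ≠ 0 := by
  haveI : NeZero n := ⟨by omega⟩
  intro h
  have := ZMod.val_cast_of_lt hlt
  rw [h] at this
  simp [ZMod.val_zero] at this
  omega

lemma circ_adj_add_one (hn : 7 ≤ n) (x : ZMod n) : (circGraph n {1,3}).Adj x (x+1) := by
  constructor
  · intro h
    have : ((1:ℕ) : ZMod n) = 0 := by
      have := congrArg (· - x) h
      simpa using this.symm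
    exact natCast_ne_zero_zmod hn (by norm_num) (by omega) this
  · right
    left
    have h3 : x + 1 - x = (1 : ZMod n) := by ring
    rw [h3]

lemma circ_adj_add_three (hn : 7 ≤ n) (x : ZMod n) : (circGraph n {1,3}).Adj x (x+3) := by
  constructor
  · intro h
    have : ((3:ℕ) : ZMod n) = 0 := by
      have h3 : ((3:ℕ) : ZMod n) = (3 : ZMod n) := by push_cast; ring
      have := congrArg (· - x) h
      simp at this
      rw [h3, ← this]
    exact natCast_ne_zero_zmod hn (by norm_num) (by omega) this
  · right
    right
    have h3 : x + 3 - x = (3 : ZMod n) := by ring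
    rw [h3]
    rfl

end Basic

section Walks
variable {n : ℕ} [NeZero n] {R : Set (ZMod n)}

/-- walk to the right until leaving `R`. -/
lemma walk_right :
    ∀ (m : ℕ) (x : ZMod n), x ∈ R → (x + (m : ZMod n) + 1) ∉ R →
      ∃ t : ℕ, t ≤ m ∧ (∀ i : ℕ, i ≤ t → x + (i : ZMod n) ∈ R) ∧ (x + (t : ZMod n) + 1) ∉ R := by
  intro m
  induction m with
  | zero =>
    intro x hx hend
    exact ⟨0, le_rfl, by intro i hi; interval_cases i <;> simpa using hx, by simpa using hend⟩
  | succ m ih =>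
    intro x hx hend
    by_cases hx1 : x + 1 ∈ R
    · obtain ⟨t, ht, hseg, hend'⟩ := ih (x+1) hx1 (by
        have he : x + 1 + (m : ZMod n) + 1 = x + ((m+1 : ℕ) : ZMod n) + 1 := by push_cast; ring
        rw [he]; exact hend)
      refine ⟨t+1, by omega, ?_, ?_⟩
      · intro i hi
        cases i with
        | zero => simpa using hx
        | succ j =>
          have := hseg j (by omega)
          have he : x + ((j+1 : ℕ) : ZMod n) = x + 1 + (j : ZMod n) := by push_cast; ring
          rw [he]; exact this
      · have he : x + ((t+1 : ℕ) : ZMod n) + 1 = x + 1 + (t : ZMod n) + 1 := by push_cast; ring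
        rw [he]; exact hend'
    · exact ⟨0, by omega, by intro i hi; interval_cases i <;> simpa using hx, by simpa using hx1⟩

/-- walk to the left until leaving `R`. -/
lemma walk_left :
    ∀ (m : ℕ) (x : ZMod n), x ∈ R → (x - (m : ZMod n) - 1) ∉ R →
      ∃ t : ℕ, t ≤ m ∧ (∀ i : ℕ, i ≤ t → x - (i : ZMod n) ∈ R) ∧ (x - (t : ZMod n) - 1) ∉ R := by
  intro m
  induction m with
  | zero =>
    intro x hx hend
    exact ⟨0, le_rfl, by intro i hi; interval_cases i <;> simpa using hx, by simpa using hend⟩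
  | succ m ih =>
    intro x hx hend
    by_cases hx1 : x - 1 ∈ R
    · obtain ⟨t, ht, hseg, hend'⟩ := ih (x-1) hx1 (by
        have he : x - 1 - (m : ZMod n) - 1 = x - ((m+1 : ℕ) : ZMod n) - 1 := by push_cast; ring
        rw [he]; exact hend)
      refine ⟨t+1, by omega, ?_, ?_⟩
      · intro i hi
        cases i with
        | zero => simpa using hx
        | succ j =>
          have := hseg j (by omega)
          have he : x - ((j+1 : ℕ) : ZMod n) = x - 1 - (j : ZMod n) := by push_cast; ring
          rw [he]; exact this
      · have he : x - ((t+1 : ℕ) : ZMod n) - 1 = x - 1 - (t : ZMod n) - 1 := by push_cast; ring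
        rw [he]; exact hend'
    · exact ⟨0, by omega, by intro i hi; interval_cases i <;> simpa using hx, by simpa using hx1⟩

end Walks


section Comp
variable {n : ℕ}

abbrev IG (n : ℕ) (R : Set (ZMod n)) : SimpleGraph ↥R := (circGraph n {1,3}).induce R

noncomputable def cmk (R : Set (ZMod n)) (x : ZMod n) (hx : x ∈ R) : (IG n R).ConnectedComponent :=
  (IG n R).connectedComponentMk ⟨x, hx⟩

variable {R : Set (ZMod n)}

lemma cmk_congr {a b : ZMod n} (ha : a ∈ R) (hb : b ∈ R) (h : a = b) :
    cmk R a ha = cmk R b hb := by subst h; rfl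

lemma cmk_eq_of_adj {x y : ZMod n} (hadj : (circGraph n {1,3}).Adj x y)
    (hx : x ∈ R) (hy : y ∈ R) : cmk R x hx = cmk R y hy :=
  ConnectedComponent.eq.mpr (Adj.reachable hadj)

lemma cmk_succ (hn : 7 ≤ n) {x : ZMod n} (hx : x ∈ R) (hx1 : x + 1 ∈ R) :
    cmk R x hx = cmk R (x+1) hx1 :=
  cmk_eq_of_adj (circ_adj_add_one hn x) hx hx1

lemma cmk_three (hn : 7 ≤ n) {x : ZMod n} (hx : x ∈ R) (hx3 : x + 3 ∈ R) :
    cmk R x hx = cmk R (x+3) hx3 :=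
  cmk_eq_of_adj (circ_adj_add_three hn x) hx hx3

lemma cmk_chain (hn : 7 ≤ n) (t : ℕ) {x : ZMod n}
    (hseg : ∀ i : ℕ, i ≤ t → x + (i : ZMod n) ∈ R) :
    cmk R x (by simpa using hseg 0 (by omega)) = cmk R (x + (t : ZMod n)) (hseg t le_rfl) := by
  induction t with
  | zero => exact cmk_congr _ _ (by simp)
  | succ m ih =>
    have h1 : cmk R x _ = cmk R (x + (m : ZMod n)) (hseg m (by omega)) :=
      ih (fun i hi => hseg i (by omega))
    rw [h1]
    have he : (x + (m : ZMod n)) + 1 = x + ((m+1 : ℕ) : ZMod n) := by push_cast; ring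
    have h2 := cmk_succ hn (hseg m (by omega)) (he.symm ▸ hseg (m+1) le_rfl)
    rw [h2]
    exact cmk_congr _ _ he

/-- every vertex reaches a right end of its component -/
lemma exists_end (hn : 7 ≤ n) {s : ZMod n} (hs : s ∉ R) {x : ZMod n} (hx : x ∈ R) :
    ∃ e, ∃ he : e ∈ R, (e+1) ∉ R ∧ cmk R x hx = cmk R e he := by
  haveI : NeZero n := ⟨by omega⟩
  have hsx : s - x ≠ 0 := by
    intro h
    have : s = x := by linear_combination h
    exact hs (this ▸ hx)
  have hval : 1 ≤ (s - x).val := by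
    rcases Nat.eq_zero_or_pos (s-x).val with h | h
    · exact absurd ((ZMod.val_eq_zero _).mp h) hsx
    · omega
  have hcast : x + (((s-x).val - 1 : ℕ) : ZMod n) + 1 = s := by
    have h2 : ((s-x).val - 1 : ℕ) + 1 = (s-x).val := by omega
    have h3 : (((s-x).val - 1 : ℕ) : ZMod n) + 1 = (((s-x).val : ℕ) : ZMod n) := by
      rw [Nat.cast_sub hval]
      ring
    have h4 : (((s-x).val : ℕ) : ZMod n) = s - x := by
      rw [ZMod.natCast_val, ZMod.cast_id]
    rw [add_assoc, h3, h4]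
    ring
  obtain ⟨t, ht, hseg, hend⟩ := walk_right ((s-x).val - 1) x hx (by rw [hcast]; exact hs)
  exact ⟨x + (t : ZMod n), hseg t le_rfl, hend, cmk_chain hn t hseg⟩

/-- counting components by a set of representatives -/
lemma card_comp_le (hn : 7 ≤ n) (Y : Set (ZMod n)) (hYR : Y ⊆ R)
    (hY : ∀ (K : (IG n R).ConnectedComponent), ∃ y, ∃ hy : y ∈ Y, cmk R y (hYR hy) = K) :
    Nat.card (IG n R).ConnectedComponent ≤ Y.ncard := by
  haveI : NeZero n := ⟨by omega⟩
  rw [← Nat.card_coe_set_eq]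
  apply Nat.card_le_card_of_surjective
    (f := fun (y : ↥Y) => cmk R y.1 (hYR y.2))
  intro K
  obtain ⟨y, hy, hK⟩ := hY K
  exact ⟨⟨y, hy⟩, hK⟩

lemma card_comp_le_one (hn : 7 ≤ n) (x₀ : ZMod n) (hx₀ : x₀ ∈ R)
    (hall : ∀ y (hy : y ∈ R), cmk R y hy = cmk R x₀ hx₀) :
    Nat.card (IG n R).ConnectedComponent ≤ 1 := by
  have h := card_comp_le hn {x₀} (by simpa using hx₀) (fun K => ?_)
  · simpa using h
  · obtain ⟨v, hv⟩ := Quot.exists_rep K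
    refine ⟨x₀, rfl, ?_⟩
    rw [← hv]
    exact (hall v.1 v.2).symm
end Comp
section Lower
variable {n : ℕ} {R : Set (ZMod n)}

def Eset (R : Set (ZMod n)) : Set (ZMod n) := {x | x ∈ R ∧ x+1 ∉ R}
def Pset (R : Set (ZMod n)) : Set (ZMod n) := {x | x ∈ R ∧ x+1 ∈ R}
def Dset (R : Set (ZMod n)) : Set (ZMod n) := {x | x ∉ R ∧ x-1 ∉ R}

lemma val_sum_eq (hn : 7 ≤ n) {a b : ZMod n} (h : a + b = -1) :
    a.val + b.val = n - 1 := by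
  haveI : NeZero n := ⟨by omega⟩
  have h1 := ZMod.val_add a b
  rw [h] at h1
  have h2 : (-1 : ZMod n).val = n - 1 := by
    have hc : ((n-1 : ℕ) : ZMod n) = -1 := by
      push_cast [Nat.cast_sub (by omega : 1 ≤ n)]
      rw [ZMod.natCast_self]; ring
    rw [← hc, ZMod.val_cast_of_lt (by omega)]
  have h3 : a.val < n := ZMod.val_lt a
  have h4 : b.val < n := ZMod.val_lt b
  rw [h2] at h1
  have h5 := Nat.mod_add_div (a.val + b.val) n
  set q := (a.val + b.val) / n with hq
  rcases Nat.eq_zero_or_pos q with h6 | h6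
  · rw [h6, Nat.mul_zero] at h5; omega
  · have hge : n ≤ n * q := Nat.le_mul_of_pos_right n h6
    generalize hw : n * q = w at h5 hge
    omega

lemma val_pos_of_ne (hn : 7 ≤ n) {x s : ZMod n} (hx : x ∈ R) (hs : s ∉ R) :
    1 ≤ (s - x).val := by
  haveI : NeZero n := ⟨by omega⟩
  rcases Nat.eq_zero_or_pos (s-x).val with h | h
  · exfalso
    have hsx : s - x = 0 := (ZMod.val_eq_zero _).mp h
    have hxs : s = x := by linear_combination hsx
    exact hs (by rw [hxs]; exact hx)
  · exact h

/-- walk to the right, with a bound on the number of steps. -/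
lemma walk_to (hn : 7 ≤ n) {x : ZMod n} (hx : x ∈ R) {s : ZMod n} (hs : s ∉ R) :
    ∃ t : ℕ, t + 1 ≤ (s - x).val ∧ (∀ i : ℕ, i ≤ t → x + (i : ZMod n) ∈ R) ∧
      (x + (t : ZMod n) + 1) ∉ R := by
  haveI : NeZero n := ⟨by omega⟩
  have hval : 1 ≤ (s - x).val := val_pos_of_ne hn hx hs
  have hcast : x + (((s-x).val - 1 : ℕ) : ZMod n) + 1 = s := by
    have h3 : (((s-x).val - 1 : ℕ) : ZMod n) + 1 = (((s-x).val : ℕ) : ZMod n) := by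
      rw [Nat.cast_sub hval]; ring
    have h4 : (((s-x).val : ℕ) : ZMod n) = s - x := by
      rw [ZMod.natCast_val, ZMod.cast_id]
    rw [add_assoc, h3, h4]; ring
  obtain ⟨t, ht, hseg, hend⟩ := walk_right ((s-x).val - 1) x hx (by rw [hcast]; exact hs)
  exact ⟨t, by omega, hseg, hend⟩

lemma walk_to_left (hn : 7 ≤ n) {x : ZMod n} (hx : x ∈ R) {s : ZMod n} (hs : s ∉ R) :
    ∃ t : ℕ, t + 1 ≤ (x - s).val ∧ (∀ i : ℕ, i ≤ t → x - (i : ZMod n) ∈ R) ∧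
      (x - (t : ZMod n) - 1) ∉ R := by
  haveI : NeZero n := ⟨by omega⟩
  have hval : 1 ≤ (x - s).val := by
    rcases Nat.eq_zero_or_pos (x-s).val with h | h
    · exfalso
      have hsx : x - s = 0 := (ZMod.val_eq_zero _).mp h
      exact hs (by have : s = x := by linear_combination (-1 : ZMod n) * hsx
                   rw [this]; exact hx)
    · exact h
  have hcast : x - (((x-s).val - 1 : ℕ) : ZMod n) - 1 = s := by
    have h3 : (((x-s).val - 1 : ℕ) : ZMod n) = (((x-s).val : ℕ) : ZMod n) - 1 := by
      rw [Nat.cast_sub hval]; push_cast; ring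
    have h4 : (((x-s).val : ℕ) : ZMod n) = x - s := by
      rw [ZMod.natCast_val, ZMod.cast_id]
    rw [h3, h4]; ring
  obtain ⟨t, ht, hseg, hend⟩ := walk_left ((x-s).val - 1) x hx (by rw [hcast]; exact hs)
  exact ⟨t, by omega, hseg, hend⟩

lemma cmk_chain_left (hn : 7 ≤ n) (t : ℕ) {x : ZMod n}
    (hseg : ∀ i : ℕ, i ≤ t → x - (i : ZMod n) ∈ R) :
    cmk R x (by simpa using hseg 0 (by omega)) = cmk R (x - (t : ZMod n)) (hseg t le_rfl) := by
  induction t with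
  | zero => exact cmk_congr _ _ (by simp)
  | succ m ih =>
    have h1 : cmk R x _ = cmk R (x - (m : ZMod n)) (hseg m (by omega)) :=
      ih (fun i hi => hseg i (by omega))
    rw [h1]
    have he : (x - ((m+1:ℕ) : ZMod n)) + 1 = x - (m : ZMod n) := by push_cast; ring
    have hm1 : x - ((m+1:ℕ) : ZMod n) ∈ R := hseg (m+1) le_rfl
    have hm : (x - ((m+1:ℕ):ZMod n)) + 1 ∈ R := by rw [he]; exact hseg m (by omega)
    have h2 : cmk R (x - ((m+1:ℕ):ZMod n)) hm1
        = cmk R ((x - ((m+1:ℕ):ZMod n)) + 1) hm := cmk_succ hn hm1 hm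
    have h3 : cmk R ((x - ((m+1:ℕ):ZMod n)) + 1) hm
        = cmk R (x - (m:ZMod n)) (hseg m (by omega)) := cmk_congr _ _ he
    exact h3.symm.trans h2.symm

lemma c_le_E (hn : 7 ≤ n) (hSne : ∃ s, s ∉ R) :
    Nat.card (IG n R).ConnectedComponent ≤ (Eset R).ncard := by
  obtain ⟨s, hs⟩ := hSne
  apply card_comp_le hn (Eset R) (fun y hy => hy.1)
  intro K
  obtain ⟨v, hv⟩ := Quot.exists_rep K
  obtain ⟨e, he, hend, heq⟩ := exists_end hn hs v.2
  refine ⟨e, ⟨he, hend⟩, ?_⟩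
  rw [← hv, ← heq]
  rfl

/-- the absorption argument. -/
lemma absorb (hn : 7 ≤ n) (x₀ : ZMod n) (hx₀ : x₀ ∈ R)
    (step2 : ∀ y (hy : y ∈ R), (y-1) ∉ R → (y-2) ∉ R → cmk R y hy = cmk R x₀ hx₀)
    (step1 : ∀ y (hy : y ∈ R) (hy2 : y-2 ∈ R), (y-1) ∉ R →
        cmk R (y-2) hy2 = cmk R x₀ hx₀ → cmk R y hy = cmk R x₀ hx₀) :
    ∀ y (hy : y ∈ R), cmk R y hy = cmk R x₀ hx₀ := by
  haveI : NeZero n := ⟨by omega⟩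
  have main : ∀ t : ℕ, ∀ h : x₀ + (t : ZMod n) ∈ R,
      cmk R (x₀ + (t : ZMod n)) h = cmk R x₀ hx₀ := by
    intro t
    induction t using Nat.strong_induction_on with
    | _ t ih =>
      match t with
      | 0 => intro h; exact cmk_congr _ _ (by simp)
      | Nat.succ t =>
        intro h
        set y := x₀ + ((t+1 : ℕ) : ZMod n) with hy
        by_cases hprev : y - 1 ∈ R
        · have heq : x₀ + (t : ZMod n) = y - 1 := by rw [hy]; push_cast; ring
          have hmem : x₀ + (t : ZMod n) ∈ R := by rw [heq]; exact hprev
          have h1 : cmk R (y-1) hprev = cmk R x₀ hx₀ :=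
            (cmk_congr hmem hprev heq).symm.trans (ih t (by omega) hmem)
          have hy1 : (y-1)+1 ∈ R := by rw [(by ring : (y-1)+1 = y)]; exact h
          have h2 : cmk R (y-1) hprev = cmk R ((y-1)+1) hy1 := cmk_succ hn _ _
          have h3 : cmk R ((y-1)+1) hy1 = cmk R y h := cmk_congr _ _ (by ring)
          rw [← h3, ← h2]; exact h1
        · by_cases hprev2 : y - 2 ∈ R
          · rcases Nat.eq_zero_or_pos t with h0 | hpos
            · exfalso
              apply hprev
              have : y - 1 = x₀ := by rw [hy, h0]; push_cast; ring
              rw [this]; exact hx₀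
            · have heq : x₀ + ((t-1 : ℕ) : ZMod n) = y - 2 := by
                rw [hy]; push_cast [Nat.cast_sub hpos]; ring
              have hmem : x₀ + ((t-1:ℕ) : ZMod n) ∈ R := by rw [heq]; exact hprev2
              have h1' : cmk R (y-2) hprev2 = cmk R x₀ hx₀ :=
                (cmk_congr hmem hprev2 heq).symm.trans (ih (t-1) (by omega) hmem)
              exact step1 y h hprev2 hprev h1'
          · exact step2 y h hprev hprev2
  intro y hy
  have hyx : y = x₀ + (((y - x₀).val : ℕ) : ZMod n) := by
    rw [ZMod.natCast_val, ZMod.cast_id]; ring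
  have hmem : x₀ + (((y - x₀).val : ℕ) : ZMod n) ∈ R := by rw [← hyx]; exact hy
  exact (cmk_congr hy hmem hyx).trans (main (y - x₀).val hmem)

end Lower
section Counts
variable {n : ℕ} {R : Set (ZMod n)}

lemma ncard_R_split (hn : 7 ≤ n) : R.ncard = (Eset R).ncard + (Pset R).ncard := by
  haveI : NeZero n := ⟨by omega⟩
  have hu : R = Eset R ∪ Pset R := by
    ext x
    by_cases h : x + 1 ∈ R <;> simp [Eset, Pset, h]
  conv_lhs => rw [hu]
  rw [Set.ncard_union_eq ?hd (Set.toFinite _) (Set.toFinite _)]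
  case hd =>
    rw [Set.disjoint_left]
    rintro a ⟨-, h1⟩ ⟨-, h2⟩
    exact h1 h2

lemma ncard_Rc_split (hn : 7 ≤ n) : Rᶜ.ncard = (Eset R).ncard + (Dset R).ncard := by
  haveI : NeZero n := ⟨by omega⟩
  have himg : (fun z => z + 1) '' (Eset R) = {x | x ∉ R ∧ x - 1 ∈ R} := by
    ext y
    constructor
    · rintro ⟨x, ⟨hx1, hx2⟩, rfl⟩
      exact ⟨hx2, by simpa using hx1⟩
    · rintro ⟨h1, h2⟩
      exact ⟨y - 1, ⟨h2, by simpa using h1⟩, by ring⟩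
  have hu : Rᶜ = (fun z => z + 1) '' (Eset R) ∪ Dset R := by
    rw [himg]
    ext x
    by_cases h : x - 1 ∈ R <;> simp [Dset, h]
  rw [hu, Set.ncard_union_eq ?hd (Set.toFinite _) (Set.toFinite _),
    Set.ncard_image_of_injective _ (add_left_injective 1)]
  case hd =>
    rw [himg, Set.disjoint_left]
    rintro a ⟨-, h1⟩ ⟨-, h2⟩
    exact h2 h1

lemma ncard_total (hn : 7 ≤ n) : R.ncard + Rᶜ.ncard = n := by
  haveI : NeZero n := ⟨by omega⟩
  rw [Set.ncard_add_ncard_compl, Nat.card_zmod]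

end Counts
section Cases
variable {n : ℕ} {R : Set (ZMod n)}

lemma zmod_one_ne_zero (hn : 7 ≤ n) : (1 : ZMod n) ≠ 0 := by
  have h := natCast_ne_zero_zmod hn (a := 1) (by norm_num) (by omega)
  simpa using h

/-- case |D| = 1 : some component has two right ends. -/
lemma caseD1 (hn : 7 ≤ n) (hc : 2 ≤ Nat.card (IG n R).ConnectedComponent)
    (hD : (Dset R).ncard = 1) :
    Nat.card (IG n R).ConnectedComponent + 1 ≤ (Eset R).ncard := by
  haveI : NeZero n := ⟨by omega⟩
  obtain ⟨j, hj⟩ := Set.ncard_eq_one.mp hD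
  have hjD : j ∈ Dset R := by rw [hj]; rfl
  have hjR : j ∉ R := hjD.1
  have hjm1 : j - 1 ∉ R := hjD.2
  have hj1R : j + 1 ∈ R := by
    by_contra hcon
    have hmem : j + 1 ∈ Dset R := ⟨hcon, by rw [(by ring : j+1-1 = j)]; exact hjR⟩
    rw [hj, Set.mem_singleton_iff] at hmem
    exact zmod_one_ne_zero hn (by linear_combination hmem)
  have hj2R : j - 2 ∈ R := by
    by_contra hcon
    have hmem : j - 1 ∈ Dset R := ⟨hjm1, by rw [(by ring : j-1-1 = j-2)]; exact hcon⟩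
    rw [hj, Set.mem_singleton_iff] at hmem
    exact zmod_one_ne_zero hn (by linear_combination -hmem)
  have h3mem : (j-2)+3 ∈ R := by rw [(by ring : (j-2)+3 = j+1)]; exact hj1R
  have hKj1 : cmk R (j+1) hj1R = cmk R (j-2) hj2R :=
    ((cmk_three hn hj2R h3mem).trans (cmk_congr _ hj1R (by ring))).symm
  have hj2E : j - 2 ∈ Eset R := ⟨hj2R, by rw [(by ring : j-2+1 = j-1)]; exact hjm1⟩
  by_cases hone : ∃ e, ∃ he : e ∈ R, e+1 ∉ R ∧ cmk R e he = cmk R (j-2) hj2R ∧ e ≠ j - 2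
  · obtain ⟨e, he, hend, heK, hne⟩ := hone
    have h1 : Nat.card (IG n R).ConnectedComponent ≤ (Eset R \ {j-2}).ncard := by
      apply card_comp_le hn _ (fun y hy => hy.1.1)
      intro K'
      obtain ⟨v, hv⟩ := Quot.exists_rep K'
      obtain ⟨e', he', hend', heq'⟩ := exists_end hn hjR v.2
      by_cases hcase : e' = j - 2
      · refine ⟨e, ⟨⟨he, hend⟩, hne⟩, ?_⟩
        rw [heK, ← hv]
        have : cmk R v.1 v.2 = cmk R e' he' := heq'
        rw [show (Quot.mk _ v : (IG n R).ConnectedComponent) = cmk R v.1 v.2 from rfl, this]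
        exact (cmk_congr he' hj2R hcase).symm
      · exact ⟨e', ⟨⟨he', hend'⟩, hcase⟩, by rw [← hv]; exact heq'.symm⟩
    have h2 : (Eset R \ {j-2}).ncard = (Eset R).ncard - 1 :=
      Set.ncard_diff_singleton_of_mem hj2E
    have h3 : 1 ≤ (Eset R).ncard := (Set.ncard_pos (Set.toFinite _)).mpr ⟨_, hj2E⟩
    omega
  · push_neg at hone
    exfalso
    have hall : ∀ y (hy : y ∈ R), cmk R y hy = cmk R (j-2) hj2R := by
      apply absorb hn (j-2) hj2R
      · intro y hy h1 h2
        have hyD : y - 1 ∈ Dset R := ⟨h1, by rw [(by ring : y-1-1 = y-2)]; exact h2⟩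
        rw [hj, Set.mem_singleton_iff] at hyD
        have hyj : y = j + 1 := by linear_combination hyD
        exact (cmk_congr hy hj1R hyj).trans hKj1
      · intro y hy hy2 h1 hK2
        have hend2 : (y-2)+1 ∉ R := by rw [(by ring : y-2+1 = y-1)]; exact h1
        have heq2 := hone (y-2) hy2 hend2 hK2
        have hyj : y = j := by linear_combination heq2
        exact absurd (hyj ▸ hy) hjR
    have := card_comp_le_one hn (j-2) hj2R hall
    omega

/-- case |D| = 0 : at least two nonseparating right ends. -/
lemma caseD0 (hn : 7 ≤ n) (hodd : n % 2 = 1)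
    (hc : 2 ≤ Nat.card (IG n R).ConnectedComponent)
    (hD : (Dset R).ncard = 0) (hSne : ∃ s, s ∉ R) :
    Nat.card (IG n R).ConnectedComponent + 2 ≤ (Eset R).ncard := by
  haveI : NeZero n := ⟨by omega⟩
  have hDe : Dset R = ∅ := (Set.ncard_eq_zero (Set.toFinite _)).mp hD
  have hD' : ∀ y, y ∉ R → y - 1 ∈ R := by
    intro y hy
    by_contra h2
    have : y ∈ Dset R := ⟨hy, h2⟩
    rw [hDe] at this
    exact this
  by_cases harc : ∃ x, x ∈ R ∧ x + 1 ∈ R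
  swap
  · exfalso
    push_neg at harc
    have himg : Rᶜ = (fun z => z + 1) '' R := by
      ext y
      constructor
      · intro hy
        exact ⟨y - 1, hD' y hy, by ring⟩
      · rintro ⟨z, hz, rfl⟩
        exact harc z hz
    have hnc : Rᶜ.ncard = R.ncard := by
      rw [himg, Set.ncard_image_of_injective _ (add_left_injective 1)]
    have := ncard_total (R := R) hn
    omega
  obtain ⟨x, hx, hx1⟩ := harc
  obtain ⟨s₀, hs₀⟩ := hSne
  obtain ⟨t₁, ht₁, hseg₁, hr1⟩ := walk_to hn hx1 hs₀
  set r := x + 1 + (t₁ : ZMod n) with hrdef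
  obtain ⟨t₂, ht₂, hseg₂, hl1⟩ := walk_to_left hn hx hs₀
  set l := x - (t₂ : ZMod n) with hldef
  have hsum : t₁ + t₂ + 2 ≤ n - 1 := by
    have := val_sum_eq hn (a := s₀ - (x+1)) (b := x - s₀) (by ring)
    omega
  have hrR : r ∈ R := hseg₁ t₁ le_rfl
  have hlR : l ∈ R := hseg₂ t₂ le_rfl
  have hrpred : r - 1 ∈ R := by
    rcases Nat.eq_zero_or_pos t₁ with h0 | hpos
    · have : r - 1 = x := by rw [hrdef, h0]; push_cast; ring
      rw [this]; exact hx
    · have : r - 1 = x + 1 + ((t₁-1 : ℕ) : ZMod n) := by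
        rw [hrdef]; push_cast [Nat.cast_sub hpos]; ring
      rw [this]; exact hseg₁ (t₁-1) (by omega)
  have hr2 : r + 2 ∈ R := by
    by_contra hcon
    have := hD' (r+2) hcon
    rw [(by ring : r+2-1 = r+1)] at this
    exact hr1 this
  have hl1R : l + 1 ∈ R := by
    rcases Nat.eq_zero_or_pos t₂ with h0 | hpos
    · have : l + 1 = x + 1 := by rw [hldef, h0]; push_cast; ring
      rw [this]; exact hx1
    · have : l + 1 = x - ((t₂-1 : ℕ) : ZMod n) := by
        rw [hldef]; push_cast [Nat.cast_sub hpos]; ring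
      rw [this]; exact hseg₂ (t₂-1) (by omega)
  have hl2 : l - 2 ∈ R := by
    have := hD' (l-1) hl1
    rw [(by ring : l-1-1 = l-2)] at this
    exact this
  have hl2end : (l-2)+1 ∉ R := by rw [(by ring : l-2+1 = l-1)]; exact hl1
  -- component equalities
  have hKr : cmk R r hrR = cmk R x hx :=
    ((cmk_succ hn hx hx1).trans (cmk_chain hn t₁ hseg₁)).symm
  have hKl : cmk R l hlR = cmk R x hx := (cmk_chain_left hn t₂ hseg₂).symm
  have hKl2 : cmk R (l-2) hl2 = cmk R x hx := by
    have h3mem : (l-2)+3 ∈ R := by rw [(by ring : (l-2)+3 = l+1)]; exact hl1R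
    have e1 : cmk R (l-2) hl2 = cmk R (l+1) hl1R :=
      (cmk_three hn hl2 h3mem).trans (cmk_congr h3mem hl1R (by ring))
    have e2 : cmk R l hlR = cmk R (l+1) hl1R := cmk_succ hn _ _
    rw [e1, ← e2]; exact hKl
  have hKr2 : cmk R (r+2) hr2 = cmk R x hx := by
    have h3mem : (r-1)+3 ∈ R := by rw [(by ring : (r-1)+3 = r+2)]; exact hr2
    have e1 : cmk R (r-1) hrpred = cmk R (r+2) hr2 :=
      (cmk_three hn hrpred h3mem).trans (cmk_congr _ _ (by ring))
    have e2 : cmk R (r-1) hrpred = cmk R r hrR :=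
      (cmk_succ hn hrpred (by rw [(by ring : r-1+1 = r)]; exact hrR)).trans
        (cmk_congr _ _ (by ring))
    rw [← e1, e2]; exact hKr
  -- the set of nonseparating ends
  set X : Set (ZMod n) :=
    {e | ∃ he : e ∈ R, (e+1 ∉ R) ∧ ∃ he2 : e+2 ∈ R, cmk R (e+2) he2 = cmk R e he} with hXdef
  have hrX : r ∈ X := ⟨hrR, hr1, hr2, hKr2.trans hKr.symm⟩
  have hl2X : l - 2 ∈ X := by
    refine ⟨hl2, hl2end, by rw [(by ring : l-2+2 = l)]; exact hlR, ?_⟩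
    exact (cmk_congr _ hlR (by ring)).trans (hKl.trans hKl2.symm)
  -- r ≠ l - 2 (otherwise R misses only one vertex)
  have hne : r ≠ l - 2 := by
    intro hrl
    have hz : ((t₁+t₂+3 : ℕ) : ZMod n) = 0 := by
      push_cast
      rw [hrdef, hldef] at hrl
      linear_combination hrl
    have hdvd : n ∣ t₁+t₂+3 := (CharP.cast_eq_zero_iff (ZMod n) n _).mp hz
    have hlen : n ≤ t₁+t₂+3 := Nat.le_of_dvd (by omega) hdvd
    have heq3 : t₁ + t₂ + 3 = n := by omega
    have hcov : ∀ y : ZMod n, y ≠ l - 1 → y ∈ R := by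
      intro y hy
      set d := (y - l).val with hddef
      have hdlt : d < n := ZMod.val_lt _
      have hyd : y = l + (d : ZMod n) := by
        rw [hddef, ZMod.natCast_val, ZMod.cast_id]; ring
      have hdne : d ≠ n - 1 := by
        intro h
        apply hy
        rw [hyd, h, Nat.cast_sub (by omega : 1 ≤ n), ZMod.natCast_self]
        push_cast
        ring
      by_cases hdt : d ≤ t₂
      · have : y = x - ((t₂ - d : ℕ) : ZMod n) := by
          rw [hyd, hldef]; push_cast [Nat.cast_sub hdt]; ring
        rw [this]; exact hseg₂ _ (by omega)
      · have hd1 : d - (t₂ + 1) ≤ t₁ := by omega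
        have : y = x + 1 + ((d - (t₂+1) : ℕ) : ZMod n) := by
          rw [hyd, hldef]; push_cast [Nat.cast_sub (by omega : t₂+1 ≤ d)]; ring
        rw [this]; exact hseg₁ _ hd1
    have hallK : ∀ y (hy : y ∈ R), cmk R y hy = cmk R (l-2) hl2 := by
      intro y hy
      obtain ⟨e, he, hend, heq⟩ := exists_end hn hl1 hy
      have he1 : e + 1 = l - 1 := by
        by_contra hne2
        exact hend (hcov (e+1) hne2)
      have : e = l - 2 := by linear_combination he1
      rw [heq]
      exact cmk_congr he hl2 this
    exact absurd (card_comp_le_one hn (l-2) hl2 hallK) (by omega)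
  -- counting
  have hXE : X ⊆ Eset R := by
    rintro e ⟨he, hend, -⟩
    exact ⟨he, hend⟩
  have h1 : Nat.card (IG n R).ConnectedComponent ≤ (Eset R \ X).ncard := by
    apply card_comp_le hn _ (fun y hy => hy.1.1)
    intro K'
    by_contra hcon
    push_neg at hcon
    obtain ⟨v, hv⟩ := Quot.exists_rep K'
    have hvK : cmk R v.1 v.2 = K' := hv
    have hall : ∀ y (hy : y ∈ R), cmk R y hy = cmk R v.1 v.2 := by
      apply absorb hn v.1 v.2
      · intro y hy h1 h2
        exfalso
        have : y - 1 ∈ Dset R := ⟨h1, by rw [(by ring : y-1-1 = y-2)]; exact h2⟩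
        rw [hDe] at this
        exact this
      · intro y hy hy2 h1 hK2
        have hend2 : (y-2)+1 ∉ R := by rw [(by ring : y-2+1 = y-1)]; exact h1
        by_cases hX2 : y - 2 ∈ X
        · obtain ⟨he', hend', he2', heq2'⟩ := hX2
          have hy' : (y-2)+2 ∈ R := he2'
          have e1 : cmk R y hy = cmk R ((y-2)+2) hy' := cmk_congr _ _ (by ring)
          have e2 : cmk R ((y-2)+2) hy' = cmk R (y-2) hy2 := heq2'
          rw [e1, e2]; exact hK2
        · exact absurd (hK2.trans hvK) (hcon (y-2) ⟨⟨hy2, hend2⟩, hX2⟩)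
    have := card_comp_le_one hn v.1 v.2 hall
    omega
  have h2 : (Eset R \ X).ncard = (Eset R).ncard - X.ncard :=
    Set.ncard_diff hXE (Set.toFinite _)
  have h3 : 2 ≤ X.ncard := by
    have hsub : {r, l-2} ⊆ X := by
      rintro a (rfl | rfl)
      · exact hrX
      · exact hl2X
    calc 2 = ({r, l-2} : Set (ZMod n)).ncard := (Set.ncard_pair hne).symm
    _ ≤ X.ncard := Set.ncard_le_ncard hsub (Set.toFinite _)
  have h4 : X.ncard ≤ (Eset R).ncard := Set.ncard_le_ncard hXE (Set.toFinite _)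
  omega

end Cases
section Main
variable {n : ℕ}

lemma lower_main (hn : 7 ≤ n) (hodd : n % 2 = 1) (R : Set (ZMod n))
    (hc : 2 ≤ Nat.card (IG n R).ConnectedComponent) :
    2 * Nat.card (IG n R).ConnectedComponent + 3 ≤ n ∧
      Nat.card (IG n R).ConnectedComponent + 2 ≤ Rᶜ.ncard := by
  haveI : NeZero n := ⟨by omega⟩
  have hSne : ∃ s, s ∉ R := by
    by_contra hcon
    push_neg at hcon
    have hall : ∀ y (hy : y ∈ R), cmk R y hy = cmk R 0 (hcon 0) := by
      apply absorb hn 0 (hcon 0)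
      · intro y hy h1 h2
        exact absurd (hcon (y-1)) h1
      · intro y hy hy2 h1 hK2
        exact absurd (hcon (y-1)) h1
    have := card_comp_le_one hn 0 (hcon 0) hall
    omega
  have hcE := c_le_E hn hSne
  have h1 := ncard_R_split (R := R) hn
  have h2 := ncard_Rc_split (R := R) hn
  have h3 := ncard_total (R := R) hn
  rcases Nat.lt_or_ge (Dset R).ncard 2 with hD | hD
  · have hD01 : (Dset R).ncard = 0 ∨ (Dset R).ncard = 1 := by omega
    rcases hD01 with h0 | h01
    · have hc2 := caseD0 hn hodd hc h0 hSne
      exact ⟨by omega, by omega⟩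
    · have hc1 := caseD1 hn hc h01
      exact ⟨by omega, by omega⟩
  · exact ⟨by omega, by omega⟩
end Main
section Upper
variable {k : ℕ}

/-- the set of "even" vertices kept. -/
def Rzero (k : ℕ) : Set (ZMod (2*k+1)) := (fun i : ℕ => ((2*i : ℕ) : ZMod (2*k+1))) '' {i | i < k}

lemma val2i (hk : 3 ≤ k) {i : ℕ} (hi : i < k) : ((2*i : ℕ) : ZMod (2*k+1)).val = 2*i := by
  haveI : NeZero (2*k+1) := ⟨by omega⟩
  exact ZMod.val_cast_of_lt (by omega)

lemma diff_eq (hk : 3 ≤ k) {i j : ℕ} (hi : i < k) (hj : j < k) {c : ℕ} (hc : c = 1 ∨ c = 3)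
    (h : ((2*i : ℕ) : ZMod (2*k+1)) - ((2*j : ℕ) : ZMod (2*k+1)) = ((c : ℕ) : ZMod (2*k+1))) :
    i = 0 ∧ j = k - 1 ∧ c = 3 := by
  haveI : NeZero (2*k+1) := ⟨by omega⟩
  have hz : (((2*i - 2*j - c : ℤ)) : ZMod (2*k+1)) = 0 := by
    push_cast at h ⊢
    linear_combination h
  obtain ⟨q, hq⟩ := (ZMod.intCast_zmod_eq_zero_iff_dvd _ _).mp hz
  have hcle : (c:ℤ) ≤ 3 := by rcases hc with h'|h' <;> simp [h']
  have hcge : (1:ℤ) ≤ c := by rcases hc with h'|h' <;> simp [h']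
  have hn0 : (0:ℤ) < 2*(k:ℤ)+1 := by positivity
  have hql : -1 ≤ q := by
    have h1 : ((2*k+1 : ℕ):ℤ) * (-1) ≤ ((2*k+1:ℕ):ℤ) * q := by rw [← hq]; push_cast; omega
    exact le_of_mul_le_mul_left h1 (by push_cast; omega)
  have hqu : q < 1 := by
    have h1 : ((2*k+1 : ℕ):ℤ) * q < ((2*k+1:ℕ):ℤ) * 1 := by rw [← hq]; push_cast; omega
    exact lt_of_mul_lt_mul_left h1 (by positivity)
  interval_cases q <;> push_cast at hq <;> omega

lemma adjR0 (hk : 3 ≤ k) {i j : ℕ} (hi : i < k) (hj : j < k)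
    (h : (circGraph (2*k+1) {1,3}).Adj ((2*i:ℕ) : ZMod (2*k+1)) ((2*j:ℕ) : ZMod (2*k+1))) :
    (i = 0 ∧ j = k-1) ∨ (j = 0 ∧ i = k-1) := by
  obtain ⟨hne, h4⟩ := h
  have hc1 : ((1 : ZMod (2*k+1))) = ((1:ℕ) : ZMod (2*k+1)) := by push_cast; ring
  have hc3 : ((3 : ZMod (2*k+1))) = ((3:ℕ) : ZMod (2*k+1)) := by push_cast; ring
  simp only [Set.mem_insert_iff, Set.mem_singleton_iff] at h4
  rcases h4 with (h4 | h4) | (h4 | h4)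
  · have := diff_eq hk hi hj (Or.inl rfl) (by rw [h4, hc1])
    omega
  · have := diff_eq hk hi hj (Or.inr rfl) (by rw [h4, hc3])
    omega
  · have := diff_eq hk hj hi (Or.inl rfl) (by rw [h4, hc1])
    omega
  · have := diff_eq hk hj hi (Or.inr rfl) (by rw [h4, hc3])
    omega

/-- the special adjacency: `2(k-1)` is adjacent to `0`. -/
lemma adj_special (hk : 3 ≤ k) :
    (circGraph (2*k+1) {1,3}).Adj ((2*(k-1):ℕ) : ZMod (2*k+1)) ((2*0:ℕ) : ZMod (2*k+1)) := by
  haveI : NeZero (2*k+1) := ⟨by omega⟩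
  have h0 : ((2*k+1 : ℕ) : ZMod (2*k+1)) = 0 := ZMod.natCast_self _
  constructor
  · intro h
    have h1 := congrArg ZMod.val h
    rw [val2i hk (by omega), val2i hk (by omega)] at h1
    omega
  · right; right
    show ((2*0:ℕ) : ZMod (2*k+1)) - ((2*(k-1):ℕ) : ZMod (2*k+1)) = 3
    push_cast at h0
    push_cast [Nat.cast_sub (by omega : 1 ≤ k)]
    linear_combination -h0

noncomputable def fnat (k : ℕ) (a : ℕ) : ℕ := if a = 2*(k-1) then 0 else a/2

lemma fval (hk : 3 ≤ k) : ∀ v : ↥(Rzero k), fnat k (v.1.val) < k - 1 := by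
  rintro ⟨v, i, hi, rfl⟩
  have hi' : i < k := hi
  rw [val2i hk hi']
  unfold fnat
  split_ifs with h
  · omega
  · omega


noncomputable def fmap (hk : 3 ≤ k) (v : ↥(Rzero k)) : Fin (k-1) :=
  ⟨fnat k (v.1.val), fval hk v⟩

lemma fmap_adj (hk : 3 ≤ k) : ∀ u v : ↥(Rzero k), (IG (2*k+1) (Rzero k)).Adj u v →
    fmap hk u = fmap hk v := by
  rintro ⟨u, i, hi, rfl⟩ ⟨v, j, hj, rfl⟩ hadj
  have hG : (circGraph (2*k+1) {1,3}).Adj ((2*i:ℕ) : ZMod (2*k+1)) ((2*j:ℕ) : ZMod (2*k+1)) := hadj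
  have := adjR0 hk hi hj hG
  apply Fin.ext
  show fnat k (((2*i:ℕ) : ZMod (2*k+1)).val) = fnat k (((2*j:ℕ) : ZMod (2*k+1)).val)
  rw [val2i hk hi, val2i hk hj]
  unfold fnat
  rcases this with ⟨rfl, rfl⟩ | ⟨rfl, rfl⟩ <;> split_ifs <;> omega

lemma fmap_inj (hk : 3 ≤ k) : ∀ u v : ↥(Rzero k), fmap hk u = fmap hk v →
    (IG (2*k+1) (Rzero k)).Reachable u v := by
  rintro ⟨u, i, hi, rfl⟩ ⟨v, j, hj, rfl⟩ hf
  have hi' : i < k := hi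
  have hj' : j < k := hj
  have hfv : fnat k (2*i) = fnat k (2*j) := by
    have h2 := congrArg Fin.val hf
    simp only [fmap] at h2
    rw [val2i hk hi', val2i hk hj'] at h2
    exact h2
  unfold fnat at hfv
  by_cases hik : i = k-1 <;> by_cases hjk : j = k-1
  · have : i = j := by omega
    subst this
    rfl
  · rw [if_pos (by omega), if_neg (by omega)] at hfv
    have hj0 : j = 0 := by omega
    subst hik; subst hj0
    exact Adj.reachable (adj_special hk)
  · rw [if_neg (by omega), if_pos (by omega)] at hfv
    have hi0 : i = 0 := by omega
    subst hjk; subst hi0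
    exact Adj.reachable ((adj_special hk).symm)
  · rw [if_neg (by omega), if_neg (by omega)] at hfv
    have : i = j := by omega
    subst this
    rfl

end Upper
section UpperCount
variable {k : ℕ}

lemma numComp_eq (hk : 3 ≤ k) :
    numComp (circGraph (2*k+1) {1,3}) (Rzero k)ᶜ = k - 1 := by
  haveI : NeZero (2*k+1) := ⟨by omega⟩
  have hcc : numComp (circGraph (2*k+1) {1,3}) (Rzero k)ᶜ
      = Nat.card (IG (2*k+1) (Rzero k)).ConnectedComponent := by
    rw [numComp, compl_compl]
  rw [hcc]
  set g : (IG (2*k+1) (Rzero k)).ConnectedComponent → Fin (k-1) :=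
    ConnectedComponent.lift (fmap hk) (fun u v p hp => by
      clear hp
      induction p with
      | nil => rfl
      | cons h q ih => exact (fmap_adj hk _ _ h).trans ih) with hg
  have hginj : Function.Injective g := by
    intro K K' h
    obtain ⟨u, hu⟩ := Quot.exists_rep K
    obtain ⟨v, hv⟩ := Quot.exists_rep K'
    rw [← hu, ← hv]
    have hfu : g K = fmap hk u := by rw [← hu]; rfl
    have hfv : g K' = fmap hk v := by rw [← hv]; rfl
    have : fmap hk u = fmap hk v := by rw [← hfu, ← hfv, h]
    exact ConnectedComponent.sound (fmap_inj hk u v this)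
  have hgsurj : Function.Surjective g := by
    intro t
    have htk : (t : ℕ) < k := by omega
    refine ⟨(IG (2*k+1) (Rzero k)).connectedComponentMk
      ⟨((2*(t:ℕ) : ℕ) : ZMod (2*k+1)), ⟨(t:ℕ), htk, rfl⟩⟩, ?_⟩
    apply Fin.ext
    show fnat k (((2*(t:ℕ):ℕ) : ZMod (2*k+1)).val) = (t:ℕ)
    rw [val2i hk htk]
    unfold fnat
    rw [if_neg (by omega)]
    omega
  rw [Nat.card_congr (Equiv.ofBijective g ⟨hginj, hgsurj⟩), Nat.card_eq_fintype_card,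
    Fintype.card_fin]

lemma ncard_Rzero_compl (hk : 3 ≤ k) : ((Rzero k)ᶜ).ncard = k + 1 := by
  haveI : NeZero (2*k+1) := ⟨by omega⟩
  have h1 : (Rzero k).ncard = k := by
    rw [Rzero, Set.ncard_image_of_injOn]
    · have : {i : ℕ | i < k} = ↑(Finset.range k) := by
        ext i; simp
      rw [this, Set.ncard_coe_finset, Finset.card_range]
    · intro a ha b hb hab
      have h2 := congrArg ZMod.val hab
      rw [val2i hk ha, val2i hk hb] at h2
      omega
  have h2 : (Rzero k).ncard + (Rzero k)ᶜ.ncard = 2*k+1 := by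
    rw [Set.ncard_add_ncard_compl, Nat.card_zmod]
  omega

end UpperCount
/-- `S` is a vertex cut: removing `S` leaves a disconnected graph. -/
def IsVertexCut {V : Type*} (G : SimpleGraph V) (S : Set V) : Prop :=
  1 < numComp G S

/-- Toughness: minimum of |S| / c(G - S) over vertex cuts `S`. -/
noncomputable def toughness {V : Type*} (G : SimpleGraph V) : ℝ :=
  sInf {x : ℝ | ∃ S : Set V, IsVertexCut G S ∧ x = (S.ncard : ℝ) / (numComp G S : ℝ)}

def MinimallyTough {V : Type*} (G : SimpleGraph V) (t : ℝ) : Prop :=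
  toughness G = t ∧ ∀ e ∈ G.edgeSet, toughness (G.deleteEdges {e}) < t

theorem stmt4 (k : ℕ) (hk : 3 ≤ k) :
    toughness (circGraph (2*k+1) {1, 3}) = ((k : ℝ) + 1) / ((k : ℝ) - 1) := by
  haveI : NeZero (2*k+1) := ⟨by omega⟩
  have hn : 7 ≤ 2*k+1 := by omega
  have hodd : (2*k+1) % 2 = 1 := by omega
  have hkR : (1:ℝ) ≤ (k:ℝ) - 1 := by
    have : (3:ℝ) ≤ (k:ℝ) := by exact_mod_cast hk
    linarith
  have hnum : numComp (circGraph (2*k+1) {1,3}) (Rzero k)ᶜ = k - 1 := numComp_eq hk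
  have hcut : IsVertexCut (circGraph (2*k+1) {1,3}) (Rzero k)ᶜ := by
    show 1 < numComp (circGraph (2*k+1) {1,3}) (Rzero k)ᶜ
    rw [hnum]; omega
  have hmem : ((k : ℝ) + 1) / ((k : ℝ) - 1)
      ∈ {x : ℝ | ∃ S, IsVertexCut (circGraph (2*k+1) {1,3}) S ∧
          x = (S.ncard : ℝ) / (numComp (circGraph (2*k+1) {1,3}) S : ℝ)} := by
    refine ⟨(Rzero k)ᶜ, hcut, ?_⟩
    rw [hnum, ncard_Rzero_compl hk]
    rw [Nat.cast_sub (by omega : 1 ≤ k)]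
    push_cast
    ring
  have hlb : ∀ x ∈ {x : ℝ | ∃ S, IsVertexCut (circGraph (2*k+1) {1,3}) S ∧
      x = (S.ncard : ℝ) / (numComp (circGraph (2*k+1) {1,3}) S : ℝ)},
      ((k : ℝ) + 1) / ((k : ℝ) - 1) ≤ x := by
    rintro x ⟨S, hS, rfl⟩
    have hc2 : 2 ≤ Nat.card (IG (2*k+1) Sᶜ).ConnectedComponent := hS
    obtain ⟨hL1, hL2⟩ := lower_main hn hodd Sᶜ hc2
    rw [compl_compl] at hL2
    have hnc : numComp (circGraph (2*k+1) {1,3}) S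
        = Nat.card (IG (2*k+1) Sᶜ).ConnectedComponent := rfl
    rw [hnc]
    set c := Nat.card (IG (2*k+1) Sᶜ).ConnectedComponent with hcdef
    have hcpos : (0:ℝ) < (c:ℝ) := by
      have : 0 < c := by omega
      exact_mod_cast this
    rw [div_le_div_iff₀ (by linarith) hcpos]
    have h1 : (c:ℝ) + 2 ≤ (S.ncard : ℝ) := by exact_mod_cast hL2
    have h2 : (c:ℝ) ≤ (k:ℝ) - 1 := by
      have hck : c + 1 ≤ k := by omega
      have : (c:ℝ) + 1 ≤ (k:ℝ) := by exact_mod_cast hck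
      linarith
    have key : ((c:ℝ)+2) * ((k:ℝ)-1) ≤ (S.ncard:ℝ) * ((k:ℝ)-1) :=
      mul_le_mul_of_nonneg_right h1 (by linarith)
    nlinarith [key, h2]
  have hbdd : BddBelow {x : ℝ | ∃ S, IsVertexCut (circGraph (2*k+1) {1,3}) S ∧
      x = (S.ncard : ℝ) / (numComp (circGraph (2*k+1) {1,3}) S : ℝ)} :=
    ⟨_, fun x hx => hlb x hx⟩
  exact le_antisymm (csInf_le hbdd hmem) (le_csInf ⟨_, hmem⟩ hlb)
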